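/- In the tit-for-tat production dynamic, if v_i·v* = 1 then the sequence x_i(t) is bounded above and bounded away from zero, where v* = max_j v_j. -/

import Mathlib

open Filter Finset

theorem stmt_9
(n : ℕ) (x : ℕ → Fin n → ℝ) (y : ℕ → Fin n → Fin n → ℝ) (v : Fin n → ℝ)
    (hv : ∀ j, 0 < v j)
    (hx : ∀ t i, 0 < x t i)
    (hy : ∀ t i j, 0 < y t i j)
    (hsum : ∀ t i, ∑ j, y t i j = 1)
    (hprod : ∀ t i, x (t + 1) i = ∑ j, v j * (y t j i * x t j))
    (hupd : ∀ t i j, y (t + 1) i j = v j * (y t j i * x t j) / x (t + 1) i)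
(vstar : ℝ) (hmax : ∀ j, v j ≤ vstar) (iStar : Fin n) (hiStar : v iStar = vstar)
    (i : Fin n) (hi : v i * vstar = 1) :
    ∃ m M : ℝ, 0 < m ∧ ∀ t : ℕ, m ≤ x t i ∧ x t i ≤ M := by
  have key : ∀ t j, y (t+2) i j * x (t+2) i = (v i * v j) * (y t i j * x t i) := by
    intro t j
    have h2 : y (t+2) i j = v j * (y (t+1) j i * x (t+1) j) / x (t+2) i := hupd (t+1) i j
    have h1 : y (t+1) j i = v i * (y t i j * x t i) / x (t+1) j := hupd t j i
    have hx2 := (hx (t+2) i).ne'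
    have hx1 := (hx (t+1) j).ne'
    rw [h2, h1]
    field_simp
  have hg1 : ∀ j, v i * v j ≤ 1 := fun j => by
    have := mul_le_mul_of_nonneg_left (hmax j) (hv i).le
    simpa [hi] using this
  have hg0 : ∀ j, 0 < v i * v j := fun j => mul_pos (hv i) (hv j)
  have hgstar : v i * v iStar = 1 := by rw [hiStar, hi]
  have main : ∀ s t, x (t + 2*s) i = x t i * ∑ j, (v i * v j)^s * y t i j := by
    intro s
    induction s with
    | zero => intro t; simp [hsum t i]
    | succ s ih =>
      intro t
      have h1 : t + 2*(s+1) = (t+2) + 2*s := by ring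
      rw [h1, ih (t+2)]
      have h2 : x (t+2) i * ∑ j, (v i * v j) ^ s * y (t+2) i j
          = ∑ j, (v i * v j) ^ s * (y (t+2) i j * x (t+2) i) := by
        rw [Finset.mul_sum]; congr 1; ext j; ring
      rw [h2]
      simp_rw [key t]
      rw [Finset.mul_sum]; congr 1; ext j; ring
  refine ⟨min (x 0 i * y 0 i iStar) (x 1 i * y 1 i iStar), max (x 0 i) (x 1 i),
    lt_min (mul_pos (hx 0 i) (hy 0 i iStar)) (mul_pos (hx 1 i) (hy 1 i iStar)), ?_⟩
  intro t
  obtain ⟨s, r, hr, rfl⟩ : ∃ s r, r < 2 ∧ t = r + 2*s :=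
    ⟨t/2, t%2, Nat.mod_lt _ two_pos, by omega⟩
  rw [main s r]
  have hupper : ∑ j, (v i * v j)^s * y r i j ≤ 1 := by
    rw [← hsum r i]
    apply Finset.sum_le_sum
    intro j _
    have h3 : (v i * v j)^s ≤ 1 := pow_le_one₀ (hg0 j).le (hg1 j)
    nlinarith [hy r i j]
  have hlower : y r i iStar ≤ ∑ j, (v i * v j)^s * y r i j := by
    have := Finset.single_le_sum (f := fun j => (v i * v j)^s * y r i j)
      (fun j _ => by have := hg0 j; have := hy r i j; positivity) (Finset.mem_univ iStar)
    simpa [hgstar] using this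
  interval_cases r
  · refine ⟨le_trans (min_le_left _ _) ?_, le_trans ?_ (le_max_left _ _)⟩
    · exact mul_le_mul_of_nonneg_left hlower (hx 0 i).le
    · nlinarith [mul_le_mul_of_nonneg_left hupper (hx 0 i).le]
  · refine ⟨le_trans (min_le_right _ _) ?_, le_trans ?_ (le_max_right _ _)⟩
    · exact mul_le_mul_of_nonneg_left hlower (hx 1 i).le
    · nlinarith [mul_le_mul_of_nonneg_left hupper (hx 1 i).le]
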